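/- For all nonnegative integers m and n, the generating function identity holds: the number (weighted by q^{|λ|}) of partitions λ with largest part at most m+1 and exactly n parts is q^n * [m+n choose n]_q. -/

import Mathlib

open Finset

/-- The Gaussian (q-)binomial coefficient `[a choose b]_q`, defined as
`∏_{i=1}^{b} (1 - q^(a-i+1)) / (1 - q^i)` (which is `0` when `b > a`). -/
noncomputable def qbinom (q : RatFunc ℚ) (a b : ℕ) : RatFunc ℚ :=
  ∏ i ∈ Finset.range b, (1 - q ^ ((a : ℤ) - i)) / (1 - q ^ ((i : ℤ) + 1))

/-! ### Auxiliary definitions and lemmas -/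

/-- Numerator product of the Gaussian binomial. -/
noncomputable def Nn (a b : ℕ) : RatFunc ℚ := ∏ i ∈ range b, (1 - RatFunc.X ^ ((a:ℤ) - i))

/-- Denominator product of the Gaussian binomial. -/
noncomputable def Dd (b : ℕ) : RatFunc ℚ := ∏ i ∈ range b, (1 - RatFunc.X ^ ((i:ℤ) + 1))

lemma one_sub_X_pow_ne (k : ℕ) : (1 : RatFunc ℚ) - RatFunc.X ^ (k + 1) ≠ 0 := by
  rw [sub_ne_zero]
  intro h
  have h2 : ((RatFunc.X : RatFunc ℚ) ^ (k+1)).intDegree = 0 := by rw [← h, RatFunc.intDegree_one]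
  rw [← RatFunc.algebraMap_X, ← map_pow, RatFunc.intDegree_polynomial] at h2
  simp [Polynomial.natDegree_X_pow] at h2
  omega

lemma one_sub_X_zpow_ne (k : ℕ) : (1 : RatFunc ℚ) - RatFunc.X ^ ((k:ℤ) + 1) ≠ 0 := by
  have := one_sub_X_pow_ne k
  rw [← zpow_natCast] at this
  convert this using 3
  push_cast; rfl

lemma Dd_ne (b : ℕ) : Dd b ≠ 0 := by
  unfold Dd
  exact Finset.prod_ne_zero_iff.mpr fun i _ => one_sub_X_zpow_ne i

lemma qbinom_eq (a b : ℕ) : qbinom RatFunc.X a b = Nn a b / Dd b := by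
  rw [qbinom, Nn, Dd, Finset.prod_div_distrib]

lemma Dd_succ (b : ℕ) : Dd (b+1) = Dd b * (1 - RatFunc.X^((b:ℤ)+1)) := Finset.prod_range_succ _ _

lemma Nn_succ_succ (a b : ℕ) : Nn (a+1) (b+1) = Nn a b * (1 - RatFunc.X^((a:ℤ)+1)) := by
  rw [Nn, Finset.prod_range_succ', Nn]
  congr 1
  · apply Finset.prod_congr rfl; intro i _; congr 2; push_cast; ring

lemma Nn_succ (a b : ℕ) : Nn a (b+1) = Nn a b * (1 - RatFunc.X^((a:ℤ) - b)) := by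
  rw [Nn, Finset.prod_range_succ, Nn]

lemma Nn_key (a b : ℕ) : Nn (a+1) (b+1)
    = Nn a (b+1) + RatFunc.X^((a:ℤ)-b) * (1 - RatFunc.X^((b:ℤ)+1)) * Nn a b := by
  rw [Nn_succ_succ, Nn_succ]
  have hx : (RatFunc.X : RatFunc ℚ) ≠ 0 := RatFunc.X_ne_zero
  have h2 : RatFunc.X^((a:ℤ)-b) * RatFunc.X^((b:ℤ)+1) = (RatFunc.X:RatFunc ℚ)^((a:ℤ)+1) := by
    rw [← zpow_add₀ hx]; ring_nf
  linear_combination (Nn a b) * h2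

/-- The q-Pascal recurrence for the Gaussian binomial. -/
lemma qbinom_pascal (a b : ℕ) : qbinom RatFunc.X (a+1) (b+1)
    = qbinom RatFunc.X a (b+1) + RatFunc.X^((a:ℤ)-b) * qbinom RatFunc.X a b := by
  rw [qbinom_eq, qbinom_eq, qbinom_eq, Nn_key, Dd_succ]
  have h1 := one_sub_X_zpow_ne b
  have hD := Dd_ne b
  field_simp

lemma qbinom_nn (a : ℕ) : qbinom RatFunc.X a a = 1 := by
  rw [qbinom_eq]
  rw [div_eq_one_iff_eq (Dd_ne a)]
  rw [Nn, Dd, ← Finset.prod_range_reflect]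
  apply Finset.prod_congr rfl
  intro i hi
  simp only [mem_range] at hi
  congr 2
  omega

/-- The generating function for partitions with exactly `n` parts, each at most `m+1`. -/
noncomputable def S (m n : ℕ) : RatFunc ℚ :=
  ∑ f ∈ {f : Fin n → Fin (m + 1) | ∀ i j : Fin n, i ≤ j → f j ≤ f i},
    (RatFunc.X : RatFunc ℚ) ^ (∑ i, ((f i : ℕ) + 1))

lemma mem_anti {N M : ℕ} (f : Fin N → Fin M) :
    f ∈ ({f : Fin N → Fin M | ∀ i j : Fin N, i ≤ j → f j ≤ f i} : Finset _)
    ↔ ∀ i j : Fin N, i ≤ j → f j ≤ f i := by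
  rw [Finset.mem_filter]; simp

lemma S_zero_right (m : ℕ) : S m 0 = 1 := by
  rw [S]
  rw [Finset.sum_eq_single_of_mem (fun _ : Fin 0 => (0 : Fin (m+1)))]
  · simp
  · simp
    exact Subsingleton.elim _ _
  · intro b hb hne
    exact absurd (Subsingleton.elim b _) hne

lemma S_zero_left (n : ℕ) : S 0 n = RatFunc.X ^ n := by
  rw [S]
  rw [Finset.sum_eq_single_of_mem (fun _ : Fin n => (0 : Fin 1))]
  · simp
  · simp
  · intro b hb hne
    exact absurd (Subsingleton.elim b _) hne

lemma S_rec (m n : ℕ) :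
    S (m+1) (n+1) = S m (n+1) + RatFunc.X^(m+2) * S (m+1) n := by
  rw [S, S, S, Finset.mul_sum]
  rw [← Finset.sum_filter_add_sum_filter_not _
    (fun f : Fin (n+1) → Fin (m+2) => f 0 < Fin.last (m+1))]
  congr 1
  · -- part with all values < last ↦ S m (n+1)
    apply Finset.sum_nbij' (i := fun (f : Fin (n+1) → Fin (m+2)) (k : Fin (n+1)) =>
        (⟨min (f k : ℕ) m, by omega⟩ : Fin (m+1)))
      (j := fun (g : Fin (n+1) → Fin (m+1)) (k : Fin (n+1)) => Fin.castSucc (g k))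
    · intro f hf
      simp only [Finset.mem_filter, Finset.mem_univ, true_and, mem_anti] at hf ⊢
      intro i j hij
      have h1 := hf.1 i j hij
      exact Fin.mk_le_mk.mpr (by simp only [Fin.le_def] at h1; omega)
    · intro g hg
      simp only [Finset.mem_filter, Finset.mem_univ, true_and, mem_anti] at hg ⊢
      refine ⟨fun i j hij => ?_, ?_⟩
      · exact Fin.castSucc_le_castSucc_iff.mpr (hg i j hij)
      · exact Fin.castSucc_lt_last _
    · intro f hf
      simp only [Finset.mem_filter, Finset.mem_univ, true_and, mem_anti] at hf
      funext k
      have h0 : (f k : ℕ) ≤ m := by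
        have h1 := hf.1 0 k (Fin.zero_le _)
        have h2 := hf.2
        simp only [Fin.le_def, Fin.lt_def, Fin.val_last] at h1 h2
        omega
      apply Fin.ext
      simp [h0]
    · intro g hg
      funext k
      apply Fin.ext
      have : (g k : ℕ) ≤ m := by omega
      simp [this]
    · intro f hf
      simp only [Finset.mem_filter, Finset.mem_univ, true_and, mem_anti] at hf
      congr 1
      apply Finset.sum_congr rfl
      intro k _
      have h0 : (f k : ℕ) ≤ m := by
        have h1 := hf.1 0 k (Fin.zero_le _)
        have h2 := hf.2
        simp only [Fin.le_def, Fin.lt_def, Fin.val_last] at h1 h2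
        omega
      simp [h0]
  · -- part with f 0 = last ↦ X^(m+2) * S (m+1) n
    apply Finset.sum_nbij' (i := fun (f : Fin (n+1) → Fin (m+2)) => f ∘ Fin.succ)
      (j := fun (g : Fin n → Fin (m+2)) => Fin.cons (Fin.last (m+1)) g)
    · intro f hf
      simp only [Finset.mem_filter, Finset.mem_univ, true_and, mem_anti] at hf ⊢
      intro i j hij
      exact hf.1 _ _ (Fin.succ_le_succ_iff.mpr hij)
    · intro g hg
      simp only [Finset.mem_filter, Finset.mem_univ, true_and, mem_anti, not_lt] at hg ⊢
      constructor
      · intro i j hij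
        induction i using Fin.cases with
        | zero => simp [Fin.le_last]
        | succ i' =>
          induction j using Fin.cases with
          | zero =>
            have : (i'.succ : Fin (n+1)) = 0 := le_antisymm hij (Fin.zero_le _)
            simp [← this]
          | succ j' =>
            simp only [Fin.cons_succ]
            exact hg i' j' (by rwa [← Fin.succ_le_succ_iff])
      · simp [Fin.le_last]
    · intro f hf
      simp only [Finset.mem_filter, Finset.mem_univ, true_and, mem_anti, not_lt] at hf
      have h0 : f 0 = Fin.last (m+1) := le_antisymm (Fin.le_last _) hf.2
      funext k
      induction k using Fin.cases with
      | zero => simp [h0]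
      | succ k' => simp
    · intro g hg
      funext k
      simp
    · intro f hf
      simp only [Finset.mem_filter, Finset.mem_univ, true_and, mem_anti, not_lt] at hf
      have h0 : f 0 = Fin.last (m+1) := le_antisymm (Fin.le_last _) hf.2
      rw [Fin.sum_univ_succ, ← pow_add]
      congr 1
      simp [h0]

lemma R_rec (m n : ℕ) :
    RatFunc.X^(n+1) * qbinom RatFunc.X ((m+1)+(n+1)) (n+1)
      = RatFunc.X^(n+1) * qbinom RatFunc.X (m+(n+1)) (n+1)
        + RatFunc.X^(m+2) * (RatFunc.X^n * qbinom RatFunc.X ((m+1)+n) n) := by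
  have hp := qbinom_pascal (m+n+1) n
  have he : ((m+n+1 : ℕ) : ℤ) - (n : ℤ) = ((m+1 : ℕ) : ℤ) := by push_cast; ring
  rw [he] at hp
  have hz : (RatFunc.X : RatFunc ℚ)^(((m+1:ℕ)):ℤ) = RatFunc.X^(m+1) := by
    rw [← zpow_natCast]
  rw [hz] at hp
  have e1 : (m+1)+(n+1) = (m+n+1)+1 := by ring
  have e2 : m+(n+1) = m+n+1 := by ring
  have e3 : (m+1)+n = m+n+1 := by ring
  rw [e1, e2, e3, hp]
  ring

theorem main_aux : ∀ n m : ℕ, S m n = RatFunc.X ^ n * qbinom RatFunc.X (m + n) n := by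
  intro n
  induction n with
  | zero =>
    intro m
    rw [S_zero_right]
    simp [qbinom]
  | succ n ih =>
    intro m
    induction m with
    | zero =>
      rw [S_zero_left]
      rw [zero_add, qbinom_nn, mul_one]
    | succ m ihm =>
      rw [S_rec, ihm, ih, R_rec]

/-- The generating function for partitions with exactly `n` parts, each part at most `m+1`
(a partition being encoded by the weakly decreasing sequence of its parts `i ↦ f i + 1`),
weighted by `q^{|λ|}`, equals `q^n * [m+n choose n]_q`. -/
theorem gf_partitions_bounded_parts (m n : ℕ) :
    ∑ f ∈ {f : Fin n → Fin (m + 1) | ∀ i j : Fin n, i ≤ j → f j ≤ f i},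
      (RatFunc.X : RatFunc ℚ) ^ (∑ i, ((f i : ℕ) + 1)) =
    RatFunc.X ^ n * qbinom RatFunc.X (m + n) n := by
  rw [← S]
  exact main_aux n m
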